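/- For integers v ≥ 2 and m ≥ 2, the binomial coefficient satisfies C(mv, m) < u(v) · m^(-1/2) · v^(vm) / (v-1)^((v-1)m), where u(v) = (1/√(2π)) · (v/(v-1))^(1/2). -/

import Mathlib

open Real Topology Nat

/-- The constant `u(v)` in the upper bound on the central-type binomial coefficient. -/
noncomputable def uConst (v : ℕ) : ℝ := (2 * π) ^ (-(1/2 : ℝ)) * ((v : ℝ) / ((v : ℝ) - 1)) ^ ((1/2 : ℝ))

open Stirling in
lemma stirling_le_stirling {i j : ℕ} (hi : 1 ≤ i) (hij : i ≤ j) :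
    stirlingSeq j ≤ stirlingSeq i := by
  obtain ⟨i', rfl⟩ := Nat.exists_eq_add_of_le hi
  obtain ⟨j', rfl⟩ := Nat.exists_eq_add_of_le (hi.trans hij)
  have h : i' ≤ j' := by omega
  have := stirlingSeq'_antitone h
  simpa [Function.comp, Nat.succ_eq_add_one, Nat.add_comm 1] using this

open Stirling in
lemma sqrt_pi_lt_stirling {n : ℕ} (hn : 1 ≤ n) : √π < stirlingSeq n := by
  obtain ⟨n, rfl⟩ := Nat.exists_eq_add_of_le hn
  rw [Nat.add_comm]
  have h2 : √π ≤ stirlingSeq (n + 2) := by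
    have ht : Filter.Tendsto (fun k : ℕ => stirlingSeq (k + 1)) Filter.atTop (𝓝 (√π)) :=
      (Filter.tendsto_add_atTop_iff_nat 1).mpr tendsto_stirlingSeq_sqrt_pi
    have ha : Antitone (fun k : ℕ => stirlingSeq (k + 1)) := stirlingSeq'_antitone
    exact ha.le_of_tendsto ht (n + 1)
  have h1 : stirlingSeq (n + 2) < stirlingSeq (n + 1) := by
    have hsum := log_stirlingSeq_diff_hasSum n
    have hle : (1 : ℝ) / (2 * ((0:ℕ) + 1 : ℕ) + 1) *
        ((1 / (2 * ((n:ℕ) + 1 : ℕ) + 1)) ^ 2) ^ ((0:ℕ) + 1 : ℕ) ≤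
        log (stirlingSeq (n + 1)) - log (stirlingSeq (n + 2)) :=
      le_hasSum hsum 0 (fun j _ => by positivity)
    have hterm : (0:ℝ) < (1 : ℝ) / (2 * ((0:ℕ) + 1 : ℕ) + 1) *
        ((1 / (2 * ((n:ℕ) + 1 : ℕ) + 1)) ^ 2) ^ ((0:ℕ) + 1 : ℕ) := by positivity
    have hlog : log (stirlingSeq (n + 2)) < log (stirlingSeq (n + 1)) := by linarith
    have := Real.exp_lt_exp.mpr hlog
    rwa [Real.exp_log (stirlingSeq'_pos (n + 1)), Real.exp_log (stirlingSeq'_pos n)] at this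
  linarith

theorem binom_upper_bound (v m : ℕ) (hv : 2 ≤ v) (hm : 2 ≤ m) :
    ((m * v).choose m : ℝ) <
      uConst v * (m : ℝ) ^ (-(1/2 : ℝ)) * (v : ℝ) ^ (v * m) / ((v : ℝ) - 1) ^ ((v - 1) * m) := by
  have hx0 : (0:ℝ) < (m:ℝ) := by positivity
  have hx2 : (2:ℝ) ≤ (m:ℝ) := by exact_mod_cast hm
  have hw2 : (2:ℝ) ≤ (v:ℝ) := by exact_mod_cast hv
  set x : ℝ := (m:ℝ)
  set w : ℝ := (v:ℝ)
  have hw1 : (0:ℝ) < w - 1 := by linarith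
  have hxp : (0:ℝ) < x := hx0
  set k : ℕ := m * (v - 1) with hkdef
  have hk : (k : ℝ) = x * (w - 1) := by
    have h1 : (1:ℕ) ≤ v := by omega
    push_cast [hkdef, Nat.cast_sub h1]
    ring
  have hk1 : 1 ≤ k := by
    have : 1 ≤ v - 1 := by omega
    calc 1 ≤ m * 1 := by omega
    _ ≤ m * (v - 1) := Nat.mul_le_mul_left m this
  have hmv : m * v = m + k := by
    rw [hkdef]
    obtain ⟨t, rfl⟩ := Nat.exists_eq_add_of_le hv
    have h1 : 2 + t - 1 = 1 + t := by omega
    rw [h1]; ring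
  have hvm : v * m = m + k := by rw [← hmv]; ring
  have hv1m : (v - 1) * m = k := by rw [hkdef]; ring
  clear_value k
  have e := Real.exp_pos 1
  -- factorial formula
  have fact_eq : ∀ n : ℕ, 1 ≤ n →
      ((n ! : ℕ) : ℝ) = Stirling.stirlingSeq n * (√(2 * n) * ((n:ℝ) / Real.exp 1) ^ n) := by
    intro n hn
    have hn0 : (0:ℝ) < (n:ℝ) := by exact_mod_cast hn
    rw [Stirling.stirlingSeq, div_mul_cancel₀]
    positivity
  set a := Stirling.stirlingSeq (m * v) with ha
  set b := Stirling.stirlingSeq m with hb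
  set c := Stirling.stirlingSeq k with hc
  have hsp : (0:ℝ) < √π := by positivity
  have hbpi : √π < b := sqrt_pi_lt_stirling (by omega)
  have hcpi : √π < c := sqrt_pi_lt_stirling hk1
  have hapi : √π < a := sqrt_pi_lt_stirling (by nlinarith)
  have hap : 0 < a := lt_trans hsp hapi
  have hbp : 0 < b := lt_trans hsp hbpi
  have hcp : 0 < c := lt_trans hsp hcpi
  have hab : a ≤ b := stirling_le_stirling (by omega) (by nlinarith)
  have key : a * √π < b * c := by
    calc a * √π < a * c := by exact (mul_lt_mul_iff_right₀ hap).mpr hcpi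
    _ ≤ b * c := by exact mul_le_mul_of_nonneg_right hab hcp.le
  -- choose identity
  have hmle : m ≤ m * v := by nlinarith
  have hchoose := Nat.choose_mul_factorial_mul_factorial hmle
  have hsub : m * v - m = k := by omega
  rw [hsub] at hchoose
  have hchooseR : ((m * v).choose m : ℝ) * (m ! : ℝ) * (k ! : ℝ) = ((m * v)! : ℝ) := by
    exact_mod_cast congrArg (Nat.cast : ℕ → ℝ) hchoose
  -- cast facts
  have hcastmv : ((m * v : ℕ) : ℝ) = x * w := by push_cast; ring
  have f1 : ((m * v)! : ℝ) = a * (√(2 * (x * w)) * ((x * w) / Real.exp 1) ^ (m * v)) := by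
    rw [fact_eq (m * v) (by omega), hcastmv]
  have f2 : ((m !) : ℝ) = b * (√(2 * x) * (x / Real.exp 1) ^ m) := fact_eq m (by omega)
  have f3 : ((k !) : ℝ) = c * (√(2 * (x * (w - 1))) * ((x * (w - 1)) / Real.exp 1) ^ k) := by
    rw [fact_eq k hk1, hk]
  -- the big equality
  have s1 : (0:ℝ) < √(2 * x) := by positivity
  have s2 : (0:ℝ) < √(2 * (x * (w - 1))) := by positivity
  have s3 : (0:ℝ) < √(2 * (x * w)) := by positivity
  have Eq1 : ((m * v).choose m : ℝ) =
      a / (b * c) * (√(2 * (x * w)) / (√(2 * x) * √(2 * (x * (w - 1))))) *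
        (w ^ (v * m) / (w - 1) ^ ((v - 1) * m)) := by
    rw [hvm, hv1m]
    have hne : ((m !) : ℝ) * ((k !) : ℝ) ≠ 0 := by positivity
    have hch : ((m * v).choose m : ℝ) = ((m * v)! : ℝ) / ((m !) : ℝ) / ((k !) : ℝ) := by
      field_simp
      linarith [hchooseR]
    rw [hch, f1, f2, f3, hmv]
    rw [div_pow, div_pow, div_pow, mul_pow x w, mul_pow x (w - 1), pow_add x m k,
      pow_add (Real.exp 1) m k, pow_add w m k]
    generalize hu : w - 1 = u at hw1 s2 ⊢
    generalize hE : Real.exp 1 = E at e ⊢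
    field_simp
  -- sqrt ratio equality
  have Eq2 : √(2 * (x * w)) / (√(2 * x) * √(2 * (x * (w - 1)))) =
      √π * (uConst v * x ^ (-(1/2 : ℝ))) := by
    have lhs_eq : √(2 * (x * w)) / (√(2 * x) * √(2 * (x * (w - 1)))) =
        √(w / (2 * x * (w - 1))) := by
      rw [← Real.sqrt_mul (by positivity : (0:ℝ) ≤ 2 * x), ← Real.sqrt_div (by positivity)]
      congr 1
      field_simp
    rw [lhs_eq]
    have hR0 : (0:ℝ) ≤ √π * (uConst v * x ^ (-(1/2 : ℝ))) := by
      have : (0:ℝ) < uConst v := by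
        rw [uConst]
        positivity
      positivity
    have hL0 : (0:ℝ) ≤ √(w / (2 * x * (w - 1))) := Real.sqrt_nonneg _
    have hsq : (√(w / (2 * x * (w - 1)))) ^ 2 = (√π * (uConst v * x ^ (-(1/2 : ℝ)))) ^ 2 := by
      rw [Real.sq_sqrt (by positivity)]
      rw [uConst]
      rw [mul_pow, mul_pow, mul_pow, Real.sq_sqrt Real.pi_pos.le]
      have hr : ∀ y : ℝ, 0 < y → (y ^ (-(1/2 : ℝ))) ^ 2 = y⁻¹ := by
        intro y hy
        rw [← Real.rpow_natCast (y ^ (-(1/2 : ℝ))) 2, ← Real.rpow_mul hy.le]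
        norm_num [Real.rpow_neg_one]
      have hr2 : ((w / (w - 1)) ^ ((1/2 : ℝ))) ^ 2 = w / (w - 1) := by
        rw [← Real.rpow_natCast ((w / (w-1)) ^ ((1/2 : ℝ))) 2,
          ← Real.rpow_mul (by positivity : (0:ℝ) ≤ w / (w-1))]
        norm_num [Real.rpow_one]
      rw [hr _ (by positivity : (0:ℝ) < 2 * π), hr _ hxp, hr2]
      field_simp
    calc √(w / (2 * x * (w - 1))) = √((√(w / (2 * x * (w - 1)))) ^ 2) := by
          rw [Real.sqrt_sq hL0]
    _ = √((√π * (uConst v * x ^ (-(1/2 : ℝ)))) ^ 2) := by rw [hsq]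
    _ = √π * (uConst v * x ^ (-(1/2 : ℝ))) := Real.sqrt_sq hR0
  -- assemble
  have hU : (0:ℝ) < uConst v * x ^ (-(1/2 : ℝ)) := by
    have : (0:ℝ) < uConst v := by rw [uConst]; positivity
    positivity
  have hP : (0:ℝ) < w ^ (v * m) / (w - 1) ^ ((v - 1) * m) := by positivity
  rw [Eq1, Eq2]
  have hlt : a / (b * c) * √π < 1 := by
    rw [div_mul_eq_mul_div, div_lt_one (by positivity)]
    exact key
  calc a / (b * c) * (√π * (uConst v * x ^ (-(1/2 : ℝ)))) *
        (w ^ (v * m) / (w - 1) ^ ((v - 1) * m))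
      = (a / (b * c) * √π) * ((uConst v * x ^ (-(1/2 : ℝ))) *
        (w ^ (v * m) / (w - 1) ^ ((v - 1) * m))) := by ring
    _ < 1 * ((uConst v * x ^ (-(1/2 : ℝ))) * (w ^ (v * m) / (w - 1) ^ ((v - 1) * m))) := by
        exact (mul_lt_mul_iff_left₀ (by positivity)).mpr hlt
    _ = uConst v * x ^ (-(1/2 : ℝ)) * w ^ (v * m) / (w - 1) ^ ((v - 1) * m) := by ring
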